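/- Exact cavity recursion: for the majority process on the rooted tree G_∘ (root of degree k−1, all other vertices of degree k) with external field u applied at the root, the law of the root trajectory satisfies P((σ_∘)_0^{T+1} || u_0^{T+1}) = P_0(σ_∘(0)) Σ_{(σ_1)_0^T,…,(σ_{k−1})_0^T} Π_{t=0}^T K_{u(t)}(σ_∘(t+1) | σ_{∂∘}(t)) Π_{i=1}^{k−1} P((σ_i)_0^T || (σ_∘)_0^T), where K_{u}(σ'|σ_{∂∘}) equals the indicator that σ' = sign(Σ_i σ_i + u) when the argument is nonzero and equals 1/2 otherwise. -/

import Mathlib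

open MeasureTheory ProbabilityTheory

/-- Vertices of the rooted tree in which the root has c children and every other
vertex has one parent and c children (so for c = k−1 this is the tree G_∘ with root
degree k−1 and all other degrees k).  The root is the empty list, and the children of
`i` are the vertices `j :: i` for j : Fin c. -/
abbrev TVert (c : ℕ) := List (Fin c)

/-- One step of the majority dynamics on the rooted tree under external field u at the
root: every vertex takes the sign of the sum of its children's spins, plus its
parent's spin (for non-root vertices) or the external field u (for the root); ties are
broken by the coin. -/
noncomputable def treeStep (c : ℕ) (u : ℝ) (coin : TVert c → Bool)
    (σ : TVert c → ℤ) (i : TVert c) : ℤ :=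
  let s : ℝ := (∑ j : Fin c, (σ (j :: i) : ℝ)) +
    (match i with | [] => u | _ :: p => (σ p : ℝ))
  if 0 < s then 1 else if s < 0 then -1 else if coin i then σ i else -σ i

/-- Trajectory of the rooted-tree majority dynamics under the external field
sequence u. -/
noncomputable def treeTraj (c : ℕ) (u : ℕ → ℝ) (coins : ℕ → TVert c → Bool)
    (σ0 : TVert c → ℤ) : ℕ → TVert c → ℤ
  | 0 => σ0
  | t + 1 => treeStep c (u t) (coins t) (treeTraj c u coins σ0 t)

/-- The probability, under the law μ of (initial spins, tie-breaking coins), that the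
root trajectory up to time T equals ω, when the dynamics is driven by the external
field u at the root. -/
noncomputable def rootProb (c : ℕ)
    (μ : MeasureTheory.Measure ((TVert c → Bool) × (ℕ → TVert c → Bool)))
    (T : ℕ) (u : ℕ → ℝ) (ω : ℕ → ℤ) : ℝ :=
  (μ {x | ∀ t ≤ T,
    treeTraj c u x.2 (fun v => if x.1 v then 1 else -1) t List.nil = ω t}).toReal

/-- The transition kernel K_u(next | s): if s + u ≠ 0 the next root spin is
deterministically sign(s+u); otherwise it is ±1 with probability 1/2 each. -/
noncomputable def Kker (u : ℝ) (next : ℤ) (s : ℝ) : ℝ :=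
  if s + u ≠ 0 then (if (next : ℝ) = (if 0 < s + u then 1 else -1) then 1 else 0)
  else 1 / 2

/-- Spin value (±1 : ℝ) encoded by a Boolean trajectory, read at time t (out of range
values are irrelevant and set to 1). -/
noncomputable def btrajR {n : ℕ} (f : Fin n → Bool) (t : ℕ) : ℝ :=
  if h : t < n then (if f ⟨t, h⟩ then 1 else -1) else 1

/-- Spin value (±1 : ℤ) encoded by a Boolean trajectory. -/
noncomputable def btrajZ {n : ℕ} (f : Fin n → Bool) (t : ℕ) : ℤ :=
  if h : t < n then (if f ⟨t, h⟩ then 1 else -1) else 1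
set_option linter.unusedSectionVars false
set_option maxHeartbeats 1000000

lemma btrajZ_cast {n : ℕ} (f : Fin n → Bool) {t : ℕ} (h : t < n) :
    ((btrajZ f t : ℤ) : ℝ) = btrajR f t := by
  unfold btrajZ btrajR
  rw [dif_pos h, dif_pos h]
  split_ifs <;> norm_num

lemma btrajZ_inj {n : ℕ} {f g : Fin n → Bool} {t : ℕ} (h : t < n)
    (heq : btrajZ f t = btrajZ g t) : f ⟨t, h⟩ = g ⟨t, h⟩ := by
  unfold btrajZ at heq
  rw [dif_pos h, dif_pos h] at heq
  rcases Bool.dichotomy (f ⟨t, h⟩) with h1 | h1 <;>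
    rcases Bool.dichotomy (g ⟨t, h⟩) with h2 | h2 <;>
      simp [h1, h2] at heq ⊢ <;> omega

section Tree
variable {c : ℕ}

/-- the field seen by a vertex from above -/
noncomputable def parField (c : ℕ) (u : ℝ) (σ : TVert c → ℤ) : TVert c → ℝ
  | [] => u
  | _ :: p => (σ p : ℝ)

lemma treeStep_def (u : ℝ) (coin : TVert c → Bool) (σ : TVert c → ℤ) (v : TVert c) :
    treeStep c u coin σ v =
      (if 0 < (∑ j : Fin c, (σ (j :: v) : ℝ)) + parField c u σ v then 1
       else if (∑ j : Fin c, (σ (j :: v) : ℝ)) + parField c u σ v < 0 then -1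
       else if coin v then σ v else -σ v) := by
  cases v <;> rfl

lemma treeStep_congr {u u' : ℝ} {coin coin' : TVert c → Bool} {σ σ' : TVert c → ℤ}
    {v v' : TVert c}
    (hσc : ∀ j : Fin c, σ (j :: v) = σ' (j :: v'))
    (hself : σ v = σ' v')
    (hcoin : coin v = coin' v')
    (hpar : parField c u σ v = parField c u' σ' v') :
    treeStep c u coin σ v = treeStep c u' coin' σ' v' := by
  rw [treeStep_def, treeStep_def]
  have hs : (∑ j : Fin c, (σ (j :: v) : ℝ)) + parField c u σ v =
      (∑ j : Fin c, (σ' (j :: v') : ℝ)) + parField c u' σ' v' := by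
    rw [hpar]
    congr 1
    exact Finset.sum_congr rfl fun j _ => by rw [hσc j]
  rw [hs, hcoin, hself]

/-- spins stay in {1, -1} -/
lemma treeTraj_pm {u : ℕ → ℝ} {coins : ℕ → TVert c → Bool} {σ0 : TVert c → ℤ}
    (h : ∀ v, σ0 v = 1 ∨ σ0 v = -1) (t : ℕ) (v : TVert c) :
    treeTraj c u coins σ0 t v = 1 ∨ treeTraj c u coins σ0 t v = -1 := by
  induction t generalizing v with
  | zero => exact h v
  | succ t ih =>
    show treeStep _ _ _ _ _ = 1 ∨ treeStep _ _ _ _ _ = -1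
    rw [treeStep_def]
    split_ifs with h1 h2 h3
    · simp
    · simp
    · exact ih v
    · rcases ih v with h4 | h4 <;> rw [h4] <;> simp

/-- the set of coordinates relevant for the value at `v` at time `t` -/
def TRel (t : ℕ) (v w : TVert c) : Prop :=
  ∃ m l, m ≤ v.length ∧ w = l ++ v.drop m ∧ l.length + m ≤ t

lemma TRel.mono {t t' : ℕ} {v w : TVert c} (h : t ≤ t') (hr : TRel t v w) : TRel t' v w := by
  obtain ⟨m, l, h1, h2, h3⟩ := hr
  exact ⟨m, l, h1, h2, h3.trans h⟩

lemma TRel_self (t : ℕ) (v : TVert c) : TRel t v v := ⟨0, [], Nat.zero_le _, by simp, by simp⟩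

lemma TRel_child {t : ℕ} {v w : TVert c} (j : Fin c) (h : TRel t (j :: v) w) :
    TRel (t + 1) v w := by
  obtain ⟨m, l, h1, h2, h3⟩ := h
  cases m with
  | zero =>
    refine ⟨0, l ++ [j], Nat.zero_le _, by simpa using h2, ?_⟩
    simp only [List.length_append, List.length_singleton]
    omega
  | succ m =>
    refine ⟨m, l, ?_, by simpa using h2, by omega⟩
    simpa using Nat.lt_succ_iff.mp (Nat.lt_of_succ_le (by simpa using h1))

lemma TRel_parent {t : ℕ} {a : Fin c} {p w : TVert c} (h : TRel t p w) :
    TRel (t + 1) (a :: p) w := by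
  obtain ⟨m, l, h1, h2, h3⟩ := h
  exact ⟨m + 1, l, by simpa using h1, by simpa using h2, by omega⟩

/-- locality: the trajectory at `(t, v)` only depends on coordinates in `TRel t v`. -/
lemma treeTraj_local {u : ℕ → ℝ} {coins coins' : ℕ → TVert c → Bool}
    {σ0 σ0' : TVert c → ℤ} (t : ℕ) (v : TVert c)
    (hσ : ∀ w, TRel t v w → σ0 w = σ0' w)
    (hc : ∀ s w, s < t → TRel t v w → coins s w = coins' s w) :
    treeTraj c u coins σ0 t v = treeTraj c u coins' σ0' t v := by
  induction t generalizing v with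
  | zero => exact hσ v (TRel_self 0 v)
  | succ t ih =>
    show treeStep _ _ _ _ _ = treeStep _ _ _ _ _
    refine treeStep_congr ?_ ?_ ?_ ?_
    · intro j
      exact ih (j :: v) (fun w hw => hσ w (TRel_child j hw))
        (fun s w hs hw => hc s w (hs.trans (Nat.lt_succ_self t)) (TRel_child j hw))
    · exact ih v (fun w hw => hσ w (hw.mono (Nat.le_succ t)))
        (fun s w hs hw => hc s w (hs.trans (Nat.lt_succ_self t)) (hw.mono (Nat.le_succ t)))
    · exact hc t v (Nat.lt_succ_self t) (TRel_self (t+1) v)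
    · cases v with
      | nil => rfl
      | cons a p =>
        show ((treeTraj c u coins σ0 t p : ℤ) : ℝ) = ((treeTraj c u coins' σ0' t p : ℤ) : ℝ)
        rw [ih p (fun w hw => hσ w (TRel_parent hw))
          (fun s w hs hw => hc s w (hs.trans (Nat.lt_succ_self t)) (TRel_parent hw))]

lemma TRel_nil {t : ℕ} {w : TVert c} (h : TRel t (List.nil : TVert c) w) : w.length ≤ t := by
  obtain ⟨m, l, h1, h2, h3⟩ := h
  simp only [List.drop_nil, List.append_nil] at h2
  subst h2; omega

/-- locality at the root -/
lemma treeTraj_local_root {u : ℕ → ℝ} {coins coins' : ℕ → TVert c → Bool}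
    {σ0 σ0' : TVert c → ℤ} (t : ℕ)
    (hσ : ∀ w : TVert c, w.length ≤ t → σ0 w = σ0' w)
    (hc : ∀ (s : ℕ) (w : TVert c), s < t → w.length ≤ t → coins s w = coins' s w) :
    treeTraj c u coins σ0 t List.nil = treeTraj c u coins' σ0' t List.nil :=
  treeTraj_local t List.nil (fun w hw => hσ w (TRel_nil hw))
    (fun s w hs hw => hc s w hs (TRel_nil hw))

/-- The subtree below child `i` of the root, relabelled, evolves as a copy of the
rooted process whose external field is the root trajectory, as long as the root
trajectory is `ωr`. -/
lemma treeTraj_subtree {u : ℕ → ℝ} {coins : ℕ → TVert c → Bool} {σ0 : TVert c → ℤ}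
    {ωr : ℕ → ℤ} (i : Fin c) (t : ℕ)
    (hroot : ∀ s, s < t → treeTraj c u coins σ0 s List.nil = ωr s) (v : TVert c) :
    treeTraj c u coins σ0 t (v ++ [i]) =
      treeTraj c (fun s => (ωr s : ℝ)) (fun s w => coins s (w ++ [i]))
        (fun w => σ0 (w ++ [i])) t v := by
  induction t generalizing v with
  | zero => rfl
  | succ t ih =>
    show treeStep _ _ _ _ _ = treeStep _ _ _ _ _
    have hroot' : ∀ s, s < t → treeTraj c u coins σ0 s List.nil = ωr s :=
      fun s hs => hroot s (hs.trans (Nat.lt_succ_self t))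
    refine treeStep_congr ?_ ?_ ?_ ?_
    · intro j
      exact ih hroot' (j :: v)
    · exact ih hroot' v
    · rfl
    · cases v with
      | nil =>
        show ((treeTraj c u coins σ0 t List.nil : ℤ) : ℝ) = ((ωr t : ℤ) : ℝ)
        rw [hroot t (Nat.lt_succ_self t)]
      | cons a p =>
        show ((treeTraj c u coins σ0 t (p ++ [i]) : ℤ) : ℝ) = _
        rw [ih hroot' p]
        rfl

end Tree

section Framework
variable {ι : Type*} [DecidableEq ι] {Ω : Type*} [MeasurableSpace Ω]
  (G : ι → Ω → Bool)

/-- The event `E` is determined by the coordinates `G j`, `j ∈ F`. -/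
def detBy (F : Finset ι) (E : Set Ω) : Prop :=
  ∃ s : Set (F → Bool), E = (fun x (j : F) => G (j : ι) x) ⁻¹' s

lemma detBy_of_invariant {F : Finset ι} {E : Set Ω}
    (h : ∀ x y : Ω, (∀ j ∈ F, G j x = G j y) → x ∈ E → y ∈ E) : detBy G F E := by
  refine ⟨{g | ∃ x ∈ E, ∀ j : F, G (j : ι) x = g j}, ?_⟩
  ext x
  constructor
  · intro hx
    exact ⟨x, hx, fun j => rfl⟩
  · rintro ⟨x', hx', hagree⟩
    exact h x' x (fun j hj => hagree ⟨j, hj⟩) hx'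

lemma detBy.mono {F F' : Finset ι} {E : Set Ω} (hFF : F ⊆ F') (h : detBy G F E) :
    detBy G F' E := by
  obtain ⟨s, rfl⟩ := h
  exact ⟨(fun g (j : F) => g ⟨j, hFF j.2⟩) ⁻¹' s, rfl⟩

lemma detBy.inter {F : Finset ι} {E₁ E₂ : Set Ω} (h₁ : detBy G F E₁) (h₂ : detBy G F E₂) :
    detBy G F (E₁ ∩ E₂) := by
  obtain ⟨s₁, rfl⟩ := h₁; obtain ⟨s₂, rfl⟩ := h₂
  exact ⟨s₁ ∩ s₂, rfl⟩

lemma detBy.univ {F : Finset ι} : detBy G F (Set.univ : Set Ω) := ⟨Set.univ, rfl⟩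

lemma measurable_restr (hG : ∀ j, Measurable (G j)) (F : Finset ι) :
    Measurable (fun x (j : F) => G (j : ι) x) :=
  measurable_pi_lambda _ fun j => hG j

lemma detBy.measurableSet (hG : ∀ j, Measurable (G j)) {F : Finset ι} {E : Set Ω}
    (h : detBy G F E) : MeasurableSet E := by
  obtain ⟨s, rfl⟩ := h
  exact measurable_restr G hG F s.toFinite.measurableSet

variable {μ : Measure Ω} [IsProbabilityMeasure μ]

lemma detBy.measure_inter (hG : ∀ j, Measurable (G j))
    (hindep : iIndepFun G μ)
    {F₁ F₂ : Finset ι} {E₁ E₂ : Set Ω} (hF : Disjoint F₁ F₂)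
    (h₁ : detBy G F₁ E₁) (h₂ : detBy G F₂ E₂) : μ (E₁ ∩ E₂) = μ E₁ * μ E₂ := by
  obtain ⟨s₁, rfl⟩ := h₁; obtain ⟨s₂, rfl⟩ := h₂
  exact (hindep.indepFun_finset F₁ F₂ hF hG).measure_inter_preimage_eq_mul
    s₁ s₂ s₁.toFinite.measurableSet s₂.toFinite.measurableSet

lemma detBy_biInter {κ : Type*} [DecidableEq κ] {A : Finset κ} {S : κ → Finset ι}
    {E : κ → Set Ω} (hdet : ∀ a ∈ A, detBy G (S a) (E a)) :
    detBy G (A.sup S) (⋂ a ∈ A, E a) := by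
  classical
  induction A using Finset.induction with
  | empty => simpa using detBy.univ G
  | @insert a A hnot ih =>
    rw [Finset.set_biInter_insert, Finset.sup_insert]
    exact ((hdet a (Finset.mem_insert_self a A)).mono G le_sup_left).inter G
      ((ih fun b hb => hdet b (Finset.mem_insert_of_mem hb)).mono G le_sup_right)

lemma meas_biInter_blocks (hG : ∀ j, Measurable (G j))
    (hindep : iIndepFun G μ)
    {κ : Type*} [DecidableEq κ] (A : Finset κ) (S : κ → Finset ι)
    (E : κ → Set Ω) (hdisj : ∀ a ∈ A, ∀ b ∈ A, a ≠ b → Disjoint (S a) (S b))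
    (hdet : ∀ a ∈ A, detBy G (S a) (E a)) :
    μ (⋂ a ∈ A, E a) = ∏ a ∈ A, μ (E a) := by
  classical
  induction A using Finset.induction with
  | empty => simp
  | @insert a A hnot ih =>
    rw [Finset.set_biInter_insert, Finset.prod_insert hnot]
    have hd : Disjoint (S a) (A.sup S) := by
      rw [Finset.disjoint_sup_right]
      intro b hb
      exact hdisj a (Finset.mem_insert_self a A) b (Finset.mem_insert_of_mem hb)
        (fun h => hnot (h ▸ hb))
    rw [detBy.measure_inter G hG hindep hd (hdet a (Finset.mem_insert_self a A))
      (detBy_biInter G fun b hb => hdet b (Finset.mem_insert_of_mem hb)),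
      ih (fun x hx y hy hxy => hdisj x (Finset.mem_insert_of_mem hx) y
        (Finset.mem_insert_of_mem hy) hxy)
      (fun b hb => hdet b (Finset.mem_insert_of_mem hb))]

/-- measure of a full cylinder specified along an injective family of coordinates -/
lemma meas_cell (hindep : iIndepFun G μ)
    {κ : Type*} [Fintype κ] (e : κ → ι) (he : Function.Injective e)
    (b : κ → Bool) :
    μ {x | ∀ a, G (e a) x = b a} = ∏ a, μ {x | G (e a) x = b a} := by
  classical
  have key := hindep.measure_inter_preimage_eq_mul (S := Finset.image e Finset.univ)
    (sets := fun i => {c | ∀ a, e a = i → c = b a})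
    (fun i _ => (Set.toFinite _).measurableSet)
  have h1 : (⋂ i ∈ Finset.image e Finset.univ, G i ⁻¹' {c | ∀ a, e a = i → c = b a})
      = {x | ∀ a, G (e a) x = b a} := by
    ext x
    simp only [Set.mem_iInter, Finset.mem_image, Finset.mem_univ, true_and,
      Set.mem_preimage, Set.mem_setOf_eq]
    constructor
    · intro h a
      exact h (e a) ⟨a, rfl⟩ a rfl
    · rintro h i ⟨a, rfl⟩ a' ha'
      rw [he ha']; exact h a
  have h2 : ∀ a : κ, (G (e a) ⁻¹' {c | ∀ a', e a' = e a → c = b a'}) = {x | G (e a) x = b a} := by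
    intro a
    ext x
    simp only [Set.mem_preimage, Set.mem_setOf_eq]
    constructor
    · intro h; exact h a rfl
    · intro h a' ha'; rw [he ha']; exact h
  rw [h1] at key
  rw [key, Finset.prod_image (fun a _ a' _ h => he h)]
  exact Finset.prod_congr rfl fun a _ => by rw [h2]

/-- measure of any event determined by an injective family of coordinates,
as a sum over assignments -/
lemma meas_det (hG : ∀ j, Measurable (G j))
    (hindep : iIndepFun G μ)
    {κ : Type*} [Fintype κ] [DecidableEq κ] (e : κ → ι) (he : Function.Injective e)
    (s : Set (κ → Bool)) :
    μ {x | (fun a => G (e a) x) ∈ s}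
      = ∑ y : κ → Bool, s.indicator (fun y => ∏ a, μ {x | G (e a) x = y a}) y := by
  classical
  have hU : {x | (fun a => G (e a) x) ∈ s}
      = ⋃ y : κ → Bool, if y ∈ s then {x | ∀ a, G (e a) x = y a} else ∅ := by
    ext x
    simp only [Set.mem_iUnion, Set.mem_setOf_eq]
    constructor
    · intro hx
      refine ⟨fun a => G (e a) x, ?_⟩
      rw [if_pos hx]; exact fun a => rfl
    · rintro ⟨y, hy⟩
      by_cases h : y ∈ s
      · rw [if_pos h] at hy
        have : (fun a => G (e a) x) = y := funext fun a => hy a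
        rwa [this]
      · rw [if_neg h] at hy
        simp at hy
  rw [hU, measure_iUnion ?_ ?_]
  · rw [tsum_fintype]
    refine Finset.sum_congr rfl fun y _ => ?_
    by_cases h : y ∈ s
    · rw [if_pos h, Set.indicator_of_mem h, meas_cell G hindep e he]
    · rw [if_neg h, Set.indicator_of_notMem h]
      simp
  · intro y y' hyy
    simp only [Function.onFun]
    by_cases h : y ∈ s
    · by_cases h' : y' ∈ s
      · rw [if_pos h, if_pos h']
        refine Set.disjoint_left.2 fun x hx hx' => hyy (funext fun a => ?_)
        rw [← hx a, ← hx' a]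
      · rw [if_neg h']; simp
    · rw [if_neg h]; simp
  · intro y
    by_cases h : y ∈ s
    · rw [if_pos h]
      have : {x | ∀ a, G (e a) x = y a} = ⋂ a, (G (e a)) ⁻¹' {y a} := by
        ext x; simp [Set.mem_iInter]
      rw [this]
      exact MeasurableSet.iInter fun a => hG (e a) ((Set.toFinite _).measurableSet)
    · rw [if_neg h]; simp

/-- transport: two injective coordinate families with the same marginals give the
same law to determined events. -/
lemma meas_transport (hG : ∀ j, Measurable (G j))
    (hindep : iIndepFun G μ)
    {κ : Type*} [Fintype κ] [DecidableEq κ] (e e' : κ → ι)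
    (he : Function.Injective e) (he' : Function.Injective e')
    (hm : ∀ a (b : Bool), μ {x | G (e a) x = b} = μ {x | G (e' a) x = b})
    (s : Set (κ → Bool)) :
    μ {x | (fun a => G (e a) x) ∈ s} = μ {x | (fun a => G (e' a) x) ∈ s} := by
  rw [meas_det G hG hindep e he, meas_det G hG hindep e' he']
  refine Finset.sum_congr rfl fun y _ => ?_
  by_cases h : y ∈ s
  · rw [Set.indicator_of_mem h, Set.indicator_of_mem h]
    exact Finset.prod_congr rfl fun a _ => hm a (y a)
  · rw [Set.indicator_of_notMem h, Set.indicator_of_notMem h]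

end Framework

section Setting
variable (c : ℕ) (T : ℕ) (u : ℕ → ℝ) (ωr : ℕ → ℤ)

/-- The sample space -/
abbrev SpOm (c : ℕ) := (TVert c → Bool) × (ℕ → TVert c → Bool)

/-- coordinate index type -/
abbrev CIdx (c : ℕ) := TVert c ⊕ (ℕ × TVert c)

/-- the coordinates -/
def Gco (c : ℕ) : CIdx c → SpOm c → Bool :=
  Sum.elim (fun v x => x.1 v) (fun q x => x.2 q.1 q.2)

def sig0 (x : SpOm c) : TVert c → ℤ := fun v => if x.1 v then 1 else -1

noncomputable def rootT (x : SpOm c) (t : ℕ) : ℤ :=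
  treeTraj c u x.2 (sig0 c x) t List.nil

noncomputable def subT (i : Fin c) (x : SpOm c) : ℕ → TVert c → ℤ :=
  treeTraj c (fun s => (ωr s : ℝ)) (fun s w => x.2 s (w ++ [i]))
    (fun w => if x.1 (w ++ [i]) then 1 else -1)

noncomputable def sval (τ : Fin c → Fin (T + 1) → Bool) (t : ℕ) : ℝ :=
  (∑ i, btrajR (τ i) t) + u t

/-- initial-spin event at the root -/
def A0ev : Set (SpOm c) := {x | (if x.1 List.nil then (1 : ℤ) else -1) = ωr 0}

/-- transition event at the root at time t -/
noncomputable def Cev (τ : Fin c → Fin (T + 1) → Bool) (t : ℕ) : Set (SpOm c) :=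
  {x | (if 0 < sval c T u τ t then (1 : ℤ) else if sval c T u τ t < 0 then -1
    else if x.2 t List.nil then ωr t else -ωr t) = ωr (t + 1)}

/-- subtree-trajectory event -/
def Bev (i : Fin c) (σb : Fin (T + 1) → Bool) : Set (SpOm c) :=
  {x | ∀ t ≤ T, subT c ωr i x t List.nil = btrajZ σb t}

/-- the root-trajectory event up to time T+1 -/
def bigE : Set (SpOm c) := {x | ∀ t ≤ T + 1, rootT c u x t = ωr t}

/-- the root-trajectory event for the process with external field ωr, horizon T -/
def rootE (σb : Fin (T + 1) → Bool) : Set (SpOm c) :=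
  {x | ∀ t ≤ T, treeTraj c (fun s => (ωr s : ℝ)) x.2 (sig0 c x) t List.nil = btrajZ σb t}

end Setting

section Decomp
variable {c : ℕ} {T : ℕ} {u : ℕ → ℝ} {ωr : ℕ → ℤ}

lemma subT_pm (i : Fin c) (x : SpOm c) (t : ℕ) (v : TVert c) :
    subT c ωr i x t v = 1 ∨ subT c ωr i x t v = -1 :=
  treeTraj_pm (fun w => by by_cases h : x.1 (w ++ [i]) <;> simp [h]) t v

lemma rootT_pm (x : SpOm c) (t : ℕ) :
    rootT c u x t = 1 ∨ rootT c u x t = -1 :=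
  treeTraj_pm (fun w => by by_cases h : x.1 w <;> simp [sig0, h]) t List.nil

lemma step_formula (x : SpOm c) (t : ℕ) (ht : t < T + 1) (τ : Fin c → Fin (T + 1) → Bool)
    (hroot : ∀ s, s < t → rootT c u x s = ωr s)
    (hsub : ∀ j, subT c ωr j x t List.nil = btrajZ (τ j) t) :
    rootT c u x (t + 1) =
      (if 0 < sval c T u τ t then (1 : ℤ) else if sval c T u τ t < 0 then -1
        else if x.2 t List.nil then rootT c u x t else -rootT c u x t) := by
  have hchild : ∀ j : Fin c,
      treeTraj c u x.2 (sig0 c x) t (j :: List.nil) = btrajZ (τ j) t := by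
    intro j
    have h1 := treeTraj_subtree (u := u) (coins := x.2) (σ0 := sig0 c x) (ωr := ωr)
      j t (fun s hs => hroot s hs) List.nil
    rw [show ((List.nil ++ [j] : TVert c) = (j :: List.nil)) from rfl] at h1
    rw [h1]
    exact hsub j
  show treeStep c (u t) (x.2 t) (treeTraj c u x.2 (sig0 c x) t) List.nil = _
  rw [treeStep_def]
  have hsum : (∑ j : Fin c, ((treeTraj c u x.2 (sig0 c x) t (j :: List.nil) : ℤ) : ℝ))
      + parField c (u t) (treeTraj c u x.2 (sig0 c x) t) List.nil = sval c T u τ t := by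
    unfold sval
    congr 1
    exact Finset.sum_congr rfl fun j _ => by rw [hchild j, btrajZ_cast _ ht]
  rw [hsum]
  rfl

lemma decomp :
    bigE c T u ωr = ⋃ τ : Fin c → Fin (T + 1) → Bool,
      (A0ev c ωr ∩ (⋂ t : Fin (T + 1), Cev c T u ωr τ t.val) ∩
        ⋂ i, Bev c T ωr i (τ i)) := by
  ext x
  simp only [Set.mem_iUnion, Set.mem_inter_iff, Set.mem_iInter]
  constructor
  · intro hx
    have hBev : ∀ i, x ∈ Bev c T ωr i
        (fun t' : Fin (T + 1) => decide (subT c ωr i x t'.val List.nil = 1)) := by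
      intro i t htT
      have ht : t < T + 1 := Nat.lt_succ_of_le htT
      unfold btrajZ
      rw [dif_pos ht]
      rcases subT_pm (ωr := ωr) i x t List.nil with h | h <;> simp [h]
    refine ⟨fun i => (fun t' : Fin (T + 1) => decide (subT c ωr i x t'.val List.nil = 1)),
      ⟨hx 0 (Nat.zero_le _), ?_⟩, hBev⟩
    intro t
    have ht : (t : ℕ) < T + 1 := t.isLt
    have hroot : ∀ s, s < (t : ℕ) → rootT c u x s = ωr s := fun s hs => hx s (by omega)
    have hsub : ∀ j, subT c ωr j x t.val List.nil =
        btrajZ (fun t' : Fin (T + 1) => decide (subT c ωr j x t'.val List.nil = 1)) t.val :=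
      fun j => hBev j t.val (by omega)
    have hstep := step_formula x t.val ht _ hroot hsub
    have h2 := hx (t.val + 1) (by omega)
    simp only [Cev, Set.mem_setOf_eq]
    rw [← hx t.val (le_of_lt ht), ← hstep]
    exact h2
  · rintro ⟨τ, ⟨hA, hC⟩, hB⟩
    intro t
    induction t using Nat.strong_induction_on with
    | _ t ih =>
      intro htT
      match t with
      | 0 => exact hA
      | Nat.succ t =>
        have ht : t < T + 1 := by omega
        have hroot : ∀ s, s < t → rootT c u x s = ωr s :=
          fun s hs => ih s (by omega) (by omega)
        have hsub : ∀ j, subT c ωr j x t List.nil = btrajZ (τ j) t :=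
          fun j => hB j t (by omega)
        rw [step_formula x t ht τ hroot hsub, ih t (by omega) (by omega)]
        exact hC ⟨t, ht⟩

end Decomp

section Finsets
variable {c : ℕ}

/-- all lists over `Fin c` of length at most `n`, as a finset -/
noncomputable def listsLE (c n : ℕ) : Finset (List (Fin c)) :=
  Finset.image (fun q : Fin (n + 1) × (Fin n → Fin c) => (List.ofFn q.2).take q.1)
    Finset.univ

lemma mem_listsLE (hc : 0 < c) {n : ℕ} {l : List (Fin c)} (h : l.length ≤ n) :
    l ∈ listsLE c n := by
  haveI : Inhabited (Fin c) := ⟨⟨0, hc⟩⟩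
  refine Finset.mem_image.2 ⟨(⟨l.length, by omega⟩, fun j => l.getD j default), Finset.mem_univ _, ?_⟩
  apply List.ext_getElem
  · simp [h]
  · intro i h1 h2
    have hi : i < l.length := by simpa using h2
    rw [List.getElem_take, List.getElem_ofFn]
    simp [List.getD_eq_getElem, hi]

/-- coordinates of the root system up to horizon T -/
noncomputable def Froot (c T : ℕ) : Finset (CIdx c) :=
  ((listsLE c T).image Sum.inl) ∪
    ((Finset.range T ×ˢ listsLE c T).image Sum.inr)

/-- relabeling embedding for subtree i -/
def embC (i : Fin c) : CIdx c → CIdx c :=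
  Sum.map (fun w => w ++ [i]) (fun q => (q.1, q.2 ++ [i]))

lemma append_singleton_injective (i : Fin c) :
    Function.Injective (fun w : TVert c => w ++ [i]) := fun a b h => by
  simpa using h

lemma embC_injective (i : Fin c) : Function.Injective (embC i) := by
  rintro (a | ⟨s, a⟩) (b | ⟨s', b⟩) h <;>
    simp only [embC, Sum.map, Sum.elim_inl, Sum.elim_inr, Function.comp,
      Sum.inl.injEq, Sum.inr.injEq, Prod.mk.injEq] at h
  · rw [Sum.inl.injEq]
    exact append_singleton_injective i h
  · exact absurd h (by simp)
  · exact absurd h (by simp)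
  · rw [Sum.inr.injEq, Prod.mk.injEq]
    exact ⟨h.1, append_singleton_injective i h.2⟩

lemma append_ne_nil (i : Fin c) (w : TVert c) : w ++ [i] ≠ List.nil := by simp

lemma append_singleton_last {i j : Fin c} {w w' : TVert c}
    (h : w ++ [i] = w' ++ [j]) : i = j := by
  have := congrArg List.getLast? h
  simpa using this

/-- the coordinate block for the subtree below child i -/
noncomputable def FB (c T : ℕ) (i : Fin c) : Finset (CIdx c) :=
  (Froot c T).image (embC i)

end Finsets

section Meas
variable {c : ℕ} {T : ℕ} {u : ℕ → ℝ} {ωr : ℕ → ℤ}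

lemma Gco_measurable : ∀ j : CIdx c, Measurable (Gco c j) := by
  rintro (v | ⟨s, w⟩)
  · exact (measurable_pi_apply v).comp measurable_fst
  · exact (measurable_pi_apply w).comp ((measurable_pi_apply s).comp measurable_snd)

variable {μ : Measure (SpOm c)} [IsProbabilityMeasure μ]

lemma meas_coord_false {j : CIdx c} {q : ENNReal} (h : μ {x | Gco c j x = true} = q) :
    μ {x | Gco c j x = false} = 1 - q := by
  have he : {x | Gco c j x = false} = {x | Gco c j x = true}ᶜ := by
    ext x; simp
  have hm : MeasurableSet {x | Gco c j x = true} :=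
    Gco_measurable j (measurableSet_singleton true)
  rw [he, measure_compl hm (measure_ne_top μ _), measure_univ, h]

/-- the boolean-coordinate reconstruction of the tie-breaking coins -/
noncomputable def coinsOf (g : ↥(Froot c T) → Bool) : ℕ → TVert c → Bool :=
  fun s w => if h : Sum.inr (s, w) ∈ Froot c T then g ⟨_, h⟩ else false

/-- the boolean-coordinate reconstruction of the initial spins -/
noncomputable def spinsOf (g : ↥(Froot c T) → Bool) : TVert c → ℤ :=
  fun w => if h : Sum.inl w ∈ Froot c T then (if g ⟨_, h⟩ then 1 else -1) else 1

/-- the root-trajectory event as a set of coordinate assignments -/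
def rootSet (c T : ℕ) (ωr : ℕ → ℤ) (σb : Fin (T + 1) → Bool) :
    Set (↥(Froot c T) → Bool) :=
  {g | ∀ t ≤ T, treeTraj c (fun s => (ωr s : ℝ)) (coinsOf g) (spinsOf g) t List.nil
    = btrajZ σb t}

lemma mem_Froot_inl (hc : 0 < c) {w : TVert c} (h : w.length ≤ T) :
    Sum.inl w ∈ Froot c T := by
  apply Finset.mem_union_left
  exact Finset.mem_image.2 ⟨w, mem_listsLE hc h, rfl⟩

lemma mem_Froot_inr (hc : 0 < c) {s : ℕ} {w : TVert c} (hs : s < T) (h : w.length ≤ T) :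
    Sum.inr (s, w) ∈ Froot c T := by
  apply Finset.mem_union_right
  exact Finset.mem_image.2 ⟨(s, w), Finset.mem_product.2 ⟨Finset.mem_range.2 hs,
    mem_listsLE hc h⟩, rfl⟩

lemma rootE_eq (hc : 0 < c) (σb : Fin (T + 1) → Bool) :
    rootE c T ωr σb =
      {x | (fun a : ↥(Froot c T) => Gco c a.val x) ∈ rootSet c T ωr σb} := by
  ext x
  have key : ∀ t ≤ T, treeTraj c (fun s => (ωr s : ℝ))
      (coinsOf (fun a : ↥(Froot c T) => Gco c a.val x))
      (spinsOf (fun a : ↥(Froot c T) => Gco c a.val x)) t List.nil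
      = treeTraj c (fun s => (ωr s : ℝ)) x.2 (sig0 c x) t List.nil := by
    intro t htT
    apply treeTraj_local_root
    · intro w hw
      unfold spinsOf
      rw [dif_pos (mem_Froot_inl hc (hw.trans htT))]
      rfl
    · intro s w hs hw
      unfold coinsOf
      rw [dif_pos (mem_Froot_inr hc (lt_of_lt_of_le hs htT) (hw.trans htT))]
      rfl
  constructor
  · intro hx
    intro t htT
    rw [key t htT]
    exact hx t htT
  · intro hx t htT
    rw [← key t htT]
    exact hx t htT

lemma Bev_eq (hc : 0 < c) (i : Fin c) (σb : Fin (T + 1) → Bool) :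
    Bev c T ωr i σb =
      {x | (fun a : ↥(Froot c T) => Gco c (embC i a.val) x)
        ∈ rootSet c T ωr σb} := by
  ext x
  have key : ∀ t ≤ T, treeTraj c (fun s => (ωr s : ℝ))
      (coinsOf (fun a : ↥(Froot c T) => Gco c (embC i a.val) x))
      (spinsOf (fun a : ↥(Froot c T) => Gco c (embC i a.val) x)) t List.nil
      = subT c ωr i x t List.nil := by
    intro t htT
    apply treeTraj_local_root
    · intro w hw
      unfold spinsOf
      rw [dif_pos (mem_Froot_inl hc (hw.trans htT))]
      rfl
    · intro s w hs hw
      unfold coinsOf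
      rw [dif_pos (mem_Froot_inr hc (lt_of_lt_of_le hs htT) (hw.trans htT))]
      rfl
  constructor
  · intro hx t htT
    rw [key t htT]
    exact hx t htT
  · intro hx t htT
    rw [← key t htT]
    exact hx t htT

end Meas

lemma Kker_nonneg (u : ℝ) (next : ℤ) (s : ℝ) : 0 ≤ Kker u next s := by
  unfold Kker; split_ifs <;> norm_num

section Blocks
variable {c : ℕ} {T : ℕ} {u : ℕ → ℝ} {ωr : ℕ → ℤ}

lemma detBy_A0 : detBy (Gco c) {Sum.inl List.nil} (A0ev c ωr) := by
  apply detBy_of_invariant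
  intro x y hagree hx
  have h := hagree (Sum.inl List.nil) (Finset.mem_singleton_self _)
  show (if y.1 List.nil then (1 : ℤ) else -1) = ωr 0
  have h' : x.1 List.nil = y.1 List.nil := h
  rw [← h']
  exact hx

lemma detBy_C (τ : Fin c → Fin (T + 1) → Bool) (t : ℕ) :
    detBy (Gco c) {Sum.inr (t, List.nil)} (Cev c T u ωr τ t) := by
  apply detBy_of_invariant
  intro x y hagree hx
  have h : x.2 t List.nil = y.2 t List.nil :=
    hagree (Sum.inr (t, List.nil)) (Finset.mem_singleton_self _)
  simp only [Cev, Set.mem_setOf_eq] at hx ⊢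
  rw [← h]
  exact hx

lemma detBy_B (hc : 0 < c) (i : Fin c) (σb : Fin (T + 1) → Bool) :
    detBy (Gco c) (FB c T i) (Bev c T ωr i σb) := by
  apply detBy_of_invariant
  intro x y hagree hx
  rw [Bev_eq hc i σb] at hx ⊢
  have h : (fun a : ↥(Froot c T) => Gco c (embC i a.val) x)
      = (fun a : ↥(Froot c T) => Gco c (embC i a.val) y) := by
    funext a
    exact hagree (embC i a.val) (Finset.mem_image.2 ⟨a.val, a.2, rfl⟩)
  simp only [Set.mem_setOf_eq] at hx ⊢
  rw [← h]
  exact hx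

variable {μ : Measure (SpOm c)} [IsProbabilityMeasure μ] {p : ℝ}

lemma measA0 (hp : p ∈ Set.Icc (0:ℝ) 1)
    (hinit : ∀ v, μ {x | x.1 v = true} = ENNReal.ofReal p)
    (hωr0 : ωr 0 = 1 ∨ ωr 0 = -1) :
    μ (A0ev c ωr) = if ωr 0 = 1 then ENNReal.ofReal p else 1 - ENNReal.ofReal p := by
  rcases hωr0 with h | h
  · rw [if_pos h]
    have he : A0ev c ωr = {x | x.1 List.nil = true} := by
      ext x
      by_cases hb : x.1 List.nil <;> simp [A0ev, h, hb]
    rw [he]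
    exact hinit List.nil
  · rw [if_neg (by rw [h]; decide)]
    have he : A0ev c ωr = {x | Gco c (Sum.inl List.nil) x = false} := by
      ext x
      by_cases hb : x.1 List.nil <;> simp [A0ev, h, hb, Gco]
    rw [he]
    exact meas_coord_false (hinit List.nil)

lemma measC (hfair : ∀ t v, μ {x | x.2 t v = true} = 1/2)
    (τ : Fin c → Fin (T + 1) → Bool) (t : ℕ)
    (h1 : ωr t = 1 ∨ ωr t = -1) (h2 : ωr (t + 1) = 1 ∨ ωr (t + 1) = -1) :
    μ (Cev c T u ωr τ t)
      = ENNReal.ofReal (Kker (u t) (ωr (t + 1)) (∑ i, btrajR (τ i) t)) := by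
  have hsv : sval c T u τ t = (∑ i, btrajR (τ i) t) + u t := rfl
  have hhalf : ENNReal.ofReal (1/2 : ℝ) = 1/2 := by
    rw [ENNReal.ofReal_div_of_pos (by norm_num), ENNReal.ofReal_one, ENNReal.ofReal_ofNat]
  have hcompl : (1 : ENNReal) - 1/2 = 1/2 := by rw [one_div, ENNReal.one_sub_inv_two]
  rcases lt_trichotomy 0 (sval c T u τ t) with hs | hs | hs
  · have hne : (∑ i, btrajR (τ i) t) + u t ≠ 0 := by rw [← hsv]; exact hs.ne'
    rw [Kker, if_pos hne]
    have hif : (if 0 < (∑ i, btrajR (τ i) t) + u t then (1:ℝ) else -1) = 1 := by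
      rw [if_pos (by rw [← hsv]; exact hs)]
    rw [hif]
    have he : Cev c T u ωr τ t = {x | (1 : ℤ) = ωr (t + 1)} := by
      ext x; simp [Cev, hs]
    rcases h2 with h | h
    · rw [he, h]
      have h0 : {x : SpOm c | (1:ℤ) = 1} = Set.univ := by ext x; simp
      rw [h0, measure_univ, if_pos (by norm_num)]
      norm_num
    · rw [he, h]
      have h0 : {x : SpOm c | (1:ℤ) = -1} = ∅ := by ext x; simp
      rw [h0, measure_empty, if_neg (by norm_num)]
      norm_num
  · have hne : ¬((∑ i, btrajR (τ i) t) + u t ≠ 0) := by rw [← hsv]; exact not_not.2 hs.symm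
    rw [Kker, if_neg hne, hhalf]
    have he : Cev c T u ωr τ t
        = {x | (if x.2 t List.nil then ωr t else -ωr t) = ωr (t + 1)} := by
      ext x; simp [Cev, hs.symm.le.not_gt, (le_of_eq hs).not_gt]
    rw [he]
    rcases h1 with ha | ha <;> rcases h2 with hb | hb
    · have h0 : {x : SpOm c | (if x.2 t List.nil then ωr t else -ωr t) = ωr (t + 1)}
          = {x | x.2 t List.nil = true} := by
        ext x; by_cases hx : x.2 t List.nil <;> simp [hx, ha, hb]
      rw [h0]; exact hfair t List.nil
    · have h0 : {x : SpOm c | (if x.2 t List.nil then ωr t else -ωr t) = ωr (t + 1)}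
          = {x | Gco c (Sum.inr (t, List.nil)) x = false} := by
        ext x; by_cases hx : x.2 t List.nil <;> simp [hx, ha, hb, Gco]
      rw [h0, meas_coord_false (hfair t List.nil), hcompl]
    · have h0 : {x : SpOm c | (if x.2 t List.nil then ωr t else -ωr t) = ωr (t + 1)}
          = {x | Gco c (Sum.inr (t, List.nil)) x = false} := by
        ext x; by_cases hx : x.2 t List.nil <;> simp [hx, ha, hb, Gco]
      rw [h0, meas_coord_false (hfair t List.nil), hcompl]
    · have h0 : {x : SpOm c | (if x.2 t List.nil then ωr t else -ωr t) = ωr (t + 1)}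
          = {x | x.2 t List.nil = true} := by
        ext x; by_cases hx : x.2 t List.nil <;> simp [hx, ha, hb]
      rw [h0]; exact hfair t List.nil
  · have hne : (∑ i, btrajR (τ i) t) + u t ≠ 0 := by rw [← hsv]; exact ne_of_lt hs
    rw [Kker, if_pos hne]
    have hif : (if 0 < (∑ i, btrajR (τ i) t) + u t then (1:ℝ) else -1) = -1 := by
      rw [if_neg (by rw [← hsv]; exact not_lt.2 hs.le)]
    rw [hif]
    have he : Cev c T u ωr τ t = {x | (-1 : ℤ) = ωr (t + 1)} := by
      ext x; simp [Cev, (le_of_lt hs).not_gt, hs]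
    rcases h2 with h | h
    · rw [he, h]
      have h0 : {x : SpOm c | (-1:ℤ) = 1} = ∅ := by ext x; simp
      rw [h0, measure_empty, if_neg (by norm_num)]
      norm_num
    · rw [he, h]
      have h0 : {x : SpOm c | (-1:ℤ) = -1} = Set.univ := by ext x; simp
      rw [h0, measure_univ, if_pos (by norm_num)]
      norm_num
end Blocks

section Assemble
variable {c : ℕ} {T : ℕ} {u : ℕ → ℝ} {ωr : ℕ → ℤ}

lemma not_inlnil_mem_FB (i : Fin c) : Sum.inl List.nil ∉ FB c T i := by
  intro h
  obtain ⟨a, _, ha⟩ := Finset.mem_image.1 h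
  rcases a with w | ⟨s, w⟩ <;> simp [embC] at ha

lemma not_inr_mem_FB (i : Fin c) (t : ℕ) : Sum.inr (t, List.nil) ∉ FB c T i := by
  intro h
  obtain ⟨a, _, ha⟩ := Finset.mem_image.1 h
  rcases a with w | ⟨s, w⟩ <;> simp [embC] at ha

lemma FB_disjoint {i j : Fin c} (hij : i ≠ j) : Disjoint (FB c T i) (FB c T j) := by
  rw [Finset.disjoint_left]
  intro a hai haj
  obtain ⟨b, _, hb⟩ := Finset.mem_image.1 hai
  obtain ⟨b', _, hb'⟩ := Finset.mem_image.1 haj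
  rw [← hb'] at hb
  rcases b with w | ⟨s, w⟩ <;> rcases b' with w' | ⟨s', w'⟩ <;>
    simp only [embC, Sum.map, Sum.elim_inl, Sum.elim_inr, Function.comp,
      Sum.inl.injEq, Sum.inr.injEq, Prod.mk.injEq] at hb
  · exact hij (append_singleton_last hb)
  · exact absurd hb (by simp)
  · exact absurd hb (by simp)
  · exact hij (append_singleton_last hb.2)

/-- the block index type -/
abbrev BIdx (c T : ℕ) := Option (Fin (T + 1) ⊕ Fin c)

noncomputable def Sblk (c T : ℕ) : BIdx c T → Finset (CIdx c)
  | none => {Sum.inl List.nil}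
  | some (Sum.inl t) => {Sum.inr (t.val, List.nil)}
  | some (Sum.inr i) => FB c T i

noncomputable def Eblk (c T : ℕ) (u : ℕ → ℝ) (ωr : ℕ → ℤ)
    (τ : Fin c → Fin (T + 1) → Bool) : BIdx c T → Set (SpOm c)
  | none => A0ev c ωr
  | some (Sum.inl t) => Cev c T u ωr τ t.val
  | some (Sum.inr i) => Bev c T ωr i (τ i)

lemma Sblk_disjoint (a b : BIdx c T) (hab : a ≠ b) : Disjoint (Sblk c T a) (Sblk c T b) := by
  rcases a with _ | a <;> rcases b with _ | b
  · exact absurd rfl hab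
  · rcases b with t | i
    · simp [Sblk]
    · simp only [Sblk]
      rw [Finset.disjoint_left]
      intro x hx
      rw [Finset.mem_singleton] at hx
      subst hx
      exact not_inlnil_mem_FB i
  · rcases a with t | i
    · simp [Sblk]
    · simp only [Sblk]
      rw [Finset.disjoint_right]
      intro x hx
      rw [Finset.mem_singleton] at hx
      subst hx
      exact not_inlnil_mem_FB i
  · rcases a with t | i <;> rcases b with t' | i'
    · simp only [Sblk]
      rw [Finset.disjoint_left]
      intro x hx
      rw [Finset.mem_singleton] at hx
      subst hx
      rw [Finset.mem_singleton]
      intro h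
      apply hab
      simp only [Sum.inr.injEq, Prod.mk.injEq, and_true] at h
      rw [Option.some.injEq, Sum.inl.injEq]
      exact Fin.ext h
    · simp only [Sblk]
      rw [Finset.disjoint_left]
      intro x hx
      rw [Finset.mem_singleton] at hx
      subst hx
      exact not_inr_mem_FB i' t.val
    · simp only [Sblk]
      rw [Finset.disjoint_right]
      intro x hx
      rw [Finset.mem_singleton] at hx
      subst hx
      exact not_inr_mem_FB i t'.val
    · refine FB_disjoint fun h => hab ?_
      rw [Option.some.injEq, Sum.inr.injEq]
      exact h

lemma Eblk_inter (τ : Fin c → Fin (T + 1) → Bool) :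
    (⋂ a ∈ (Finset.univ : Finset (BIdx c T)), Eblk c T u ωr τ a)
      = A0ev c ωr ∩ (⋂ t : Fin (T + 1), Cev c T u ωr τ t.val) ∩ ⋂ i, Bev c T ωr i (τ i) := by
  ext x
  simp only [Set.mem_iInter, Set.mem_inter_iff, Finset.mem_univ, true_implies]
  constructor
  · intro h
    exact ⟨⟨h none, fun t => h (some (Sum.inl t))⟩, fun i => h (some (Sum.inr i))⟩
  · rintro ⟨⟨h1, h2⟩, h3⟩ a
    rcases a with _ | (t | i)
    · exact h1
    · exact h2 t
    · exact h3 i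

variable {μ : Measure (SpOm c)} [IsProbabilityMeasure μ] {p : ℝ}

lemma measB (hc : 0 < c)
    (hindep : iIndepFun (Gco c) μ)
    (hinit : ∀ v, μ {x | x.1 v = true} = ENNReal.ofReal p)
    (hfair : ∀ t v, μ {x | x.2 t v = true} = 1/2)
    (i : Fin c) (σb : Fin (T + 1) → Bool) :
    μ (Bev c T ωr i σb) = μ (rootE c T ωr σb) := by
  rw [Bev_eq hc i σb, rootE_eq hc σb]
  refine meas_transport (Gco c) Gco_measurable hindep
    (embC i ∘ Subtype.val) Subtype.val
    ((embC_injective i).comp Subtype.val_injective) Subtype.val_injective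
    ?_ (rootSet c T ωr σb)
  rintro ⟨(w | ⟨s, w⟩), ha⟩ b
  · cases b
    · exact (meas_coord_false (j := Sum.inl (w ++ [i])) (hinit (w ++ [i]))).trans
        (meas_coord_false (j := Sum.inl w) (hinit w)).symm
    · exact (hinit (w ++ [i])).trans (hinit w).symm
  · cases b
    · exact (meas_coord_false (j := Sum.inr (s, w ++ [i])) (hfair s (w ++ [i]))).trans
        (meas_coord_false (j := Sum.inr (s, w)) (hfair s w)).symm
    · exact (hfair s (w ++ [i])).trans (hfair s w).symm

lemma measEtau (hc : 0 < c)
    (hindep : iIndepFun (Gco c) μ)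
    (τ : Fin c → Fin (T + 1) → Bool) :
    μ (A0ev c ωr ∩ (⋂ t : Fin (T + 1), Cev c T u ωr τ t.val) ∩ ⋂ i, Bev c T ωr i (τ i))
      = μ (A0ev c ωr) * ((∏ t : Fin (T + 1), μ (Cev c T u ωr τ t.val)) *
        ∏ i, μ (Bev c T ωr i (τ i))) := by
  rw [← Eblk_inter τ]
  rw [meas_biInter_blocks (Gco c) Gco_measurable hindep Finset.univ (Sblk c T)
    (Eblk c T u ωr τ) (fun a _ b _ hab => Sblk_disjoint a b hab) ?_]
  · rw [show (Finset.univ : Finset (BIdx c T)).prod (fun a => μ (Eblk c T u ωr τ a))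
      = ∏ a : BIdx c T, μ (Eblk c T u ωr τ a) from rfl]
    rw [Fintype.prod_option, Fintype.prod_sum_type]
    rfl
  · rintro (_ | (t | i)) _
    · exact detBy_A0
    · exact detBy_C τ t.val
    · exact detBy_B hc i (τ i)

lemma measBigE (hc : 0 < c)
    (hindep : iIndepFun (Gco c) μ) :
    μ (bigE c T u ωr) = ∑ τ : Fin c → Fin (T + 1) → Bool,
      μ (A0ev c ωr ∩ (⋂ t : Fin (T + 1), Cev c T u ωr τ t.val) ∩
        ⋂ i, Bev c T ωr i (τ i)) := by
  rw [decomp, measure_iUnion ?_ ?_, tsum_fintype]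
  · intro τ τ' hne
    simp only [Function.onFun]
    rw [Set.disjoint_left]
    intro x hx hx'
    apply hne
    funext i t
    have e1 := Set.mem_iInter.1 hx.2 i t.val (Nat.lt_succ_iff.mp t.isLt)
    have e2 := Set.mem_iInter.1 hx'.2 i t.val (Nat.lt_succ_iff.mp t.isLt)
    rw [e1] at e2
    exact btrajZ_inj t.isLt e2
  · intro τ
    refine MeasurableSet.inter (MeasurableSet.inter ?_ ?_) ?_
    · exact (detBy_A0 (ωr := ωr)).measurableSet (Gco c) Gco_measurable
    · exact MeasurableSet.iInter fun t =>
        (detBy_C τ t.val).measurableSet (Gco c) Gco_measurable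
    · exact MeasurableSet.iInter fun i =>
        (detBy_B hc i (τ i)).measurableSet (Gco c) Gco_measurable

end Assemble

/-- the exact cavity recursion.  For the majority process on the rooted
tree G_∘ (root degree k−1, all other degrees k) with i.i.d. initialization
(P_0(+1) = p) and external field u at the root, the law of the root trajectory
satisfies
P((σ_∘)_0^{T+1} || u) = P_0(σ_∘(0)) Σ_{(σ_1)_0^T,…,(σ_{k−1})_0^T}
  Π_{t=0}^T K_{u(t)}(σ_∘(t+1) | σ_{∂∘}(t)) Π_{i=1}^{k−1} P((σ_i)_0^T || (σ_∘)_0^T),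
where each subtree trajectory is distributed as a root trajectory whose external
field is the root trajectory itself. -/
theorem exact_cavity_recursion (k : ℕ) (hk : 2 ≤ k) (p : ℝ) (hp : p ∈ Set.Icc (0:ℝ) 1)
    (μ : Measure ((TVert (k - 1) → Bool) × (ℕ → TVert (k - 1) → Bool)))
    [IsProbabilityMeasure μ]
    (hindep : iIndepFun (β := fun _ : TVert (k - 1) ⊕ (ℕ × TVert (k - 1)) => Bool)
      (Sum.elim (fun v x => x.1 v) (fun q x => x.2 q.1 q.2)) μ)
    (hinit : ∀ v, μ {x | x.1 v = true} = ENNReal.ofReal p)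
    (hfair : ∀ t v, μ {x | x.2 t v = true} = 1/2)
    (T : ℕ) (u : ℕ → ℝ) (ωr : ℕ → ℤ) (hωr : ∀ t ≤ T + 1, ωr t = 1 ∨ ωr t = -1) :
    rootProb (k - 1) μ (T + 1) u ωr =
      (if ωr 0 = 1 then p else 1 - p) *
        ∑ τ : Fin (k - 1) → (Fin (T + 1) → Bool),
          (∏ t ∈ Finset.range (T + 1),
            Kker (u t) (ωr (t + 1)) (∑ i, btrajR (τ i) t)) *
          ∏ i, rootProb (k - 1) μ T (fun t => (ωr t : ℝ)) (fun t => btrajZ (τ i) t) := by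

  have hc : 0 < k - 1 := by omega
  have hindep' : iIndepFun (Gco (k-1)) μ := by
    exact hindep
  have hLHS : rootProb (k-1) μ (T + 1) u ωr = (μ (bigE (k-1) T u ωr)).toReal := rfl
  rw [hLHS, measBigE hc hindep', ENNReal.toReal_sum (fun τ _ => measure_ne_top μ _)]
  have hAtoReal : (μ (A0ev (k-1) ωr)).toReal = if ωr 0 = 1 then p else 1 - p := by
    rw [measA0 hp hinit (hωr 0 (by omega))]
    split_ifs
    · exact ENNReal.toReal_ofReal hp.1
    · have h1 : (1 : ENNReal) - ENNReal.ofReal p = ENNReal.ofReal (1 - p) := by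
        rw [ENNReal.ofReal_sub _ hp.1, ENNReal.ofReal_one]
      rw [h1]
      exact ENNReal.toReal_ofReal (by linarith [hp.2])
  have hterm : ∀ τ : Fin (k-1) → Fin (T + 1) → Bool,
      (μ (A0ev (k-1) ωr ∩ (⋂ t : Fin (T + 1), Cev (k-1) T u ωr τ t.val) ∩
        ⋂ i, Bev (k-1) T ωr i (τ i))).toReal
      = (if ωr 0 = 1 then p else 1 - p) *
        ((∏ t ∈ Finset.range (T + 1), Kker (u t) (ωr (t + 1)) (∑ i, btrajR (τ i) t)) *
          ∏ i, rootProb (k-1) μ T (fun t => (ωr t : ℝ)) (fun t => btrajZ (τ i) t)) := by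
    intro τ
    rw [measEtau hc hindep' τ, ENNReal.toReal_mul, ENNReal.toReal_mul, hAtoReal]
    congr 1
    congr 1
    · rw [ENNReal.toReal_prod]
      have hC : ∀ t : Fin (T + 1), (μ (Cev (k-1) T u ωr τ t.val)).toReal
          = Kker (u t.val) (ωr (t.val + 1)) (∑ i, btrajR (τ i) t.val) := by
        intro t
        rw [measC hfair τ t.val (hωr t.val (by omega)) (hωr (t.val + 1) (by omega))]
        exact ENNReal.toReal_ofReal (Kker_nonneg _ _ _)
      rw [Finset.prod_congr rfl (fun t _ => hC t)]
      exact Fin.prod_univ_eq_prod_range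
        (fun t => Kker (u t) (ωr (t + 1)) (∑ i, btrajR (τ i) t)) (T + 1)
    · rw [ENNReal.toReal_prod]
      refine Finset.prod_congr rfl fun i _ => ?_
      rw [measB hc hindep' hinit hfair i (τ i)]
      rfl
  rw [Finset.sum_congr rfl (fun τ _ => hterm τ), ← Finset.mul_sum]
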